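/- Let S be the ideal of ℤ[x₁,…,xₙ] generated by the symmetric polynomials of strictly positive degree. Then the ideal generated by the polynomials h_{n-i+1}(x_{n-i+1},…,xₙ) for i = 1,…,n equals S. -/

import Mathlib

open MvPolynomial

/-- Sum of all monomials of degree `k` in the variables indexed by `s`. -/
noncomputable def hpoly (n k : ℕ) (s : Finset (Fin n)) : MvPolynomial (Fin n) ℤ :=
  ∑ μ ∈ s.sym k, (μ.1.map MvPolynomial.X).prod

namespace SpanHpolyAux

/-- Elementary symmetric polynomial in the variables indexed by `s`. -/
noncomputable def epoly (n k : ℕ) (s : Finset (Fin n)) : MvPolynomial (Fin n) ℤ :=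
  ∑ t ∈ s.powersetCard k, ∏ i ∈ t, MvPolynomial.X i

/-- Lower set of indices `< r`. -/
def LL (n r : ℕ) : Finset (Fin n) := Finset.univ.filter fun t : Fin n => (t : ℕ) < r

/-- Upper set of indices `≥ r`. -/
def UU (n r : ℕ) : Finset (Fin n) := Finset.univ.filter fun t : Fin n => r ≤ (t : ℕ)

variable {n : ℕ}

lemma hpoly_zero (s : Finset (Fin n)) : hpoly n 0 s = 1 := by
  simp [hpoly]
  rfl

lemma hpoly_empty {k : ℕ} (hk : 1 ≤ k) : hpoly n k (∅ : Finset (Fin n)) = 0 := by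
  obtain ⟨k, rfl⟩ : ∃ j, k = j + 1 := ⟨k - 1, by omega⟩
  simp [hpoly, Finset.sym_empty]

lemma epoly_zero (s : Finset (Fin n)) : epoly n 0 s = 1 := by
  simp [epoly]

lemma epoly_eq_zero {k : ℕ} {s : Finset (Fin n)} (h : s.card < k) : epoly n k s = 0 := by
  rw [epoly, Finset.powersetCard_eq_empty.2 h, Finset.sum_empty]

lemma constantCoeff_hpoly {k : ℕ} (hk : 1 ≤ k) (s : Finset (Fin n)) :
    constantCoeff (hpoly n k s) = 0 := by
  rw [hpoly, map_sum]
  refine Finset.sum_eq_zero fun μ _ => ?_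
  rw [map_multiset_prod, Multiset.map_map]
  simp only [Function.comp_def, constantCoeff_X]
  rw [Multiset.map_const', Multiset.prod_replicate, μ.2, zero_pow (by omega)]

lemma constantCoeff_epoly {k : ℕ} (hk : 1 ≤ k) (s : Finset (Fin n)) :
    constantCoeff (epoly n k s) = 0 := by
  rw [epoly, map_sum]
  refine Finset.sum_eq_zero fun t ht => ?_
  obtain ⟨-, hcard⟩ := Finset.mem_powersetCard.1 ht
  obtain ⟨i, hi⟩ := Finset.card_pos.1 (by omega : 0 < t.card)
  rw [map_prod]
  refine Finset.prod_eq_zero hi ?_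
  simp

lemma hpoly_insert {a : Fin n} {s : Finset (Fin n)} (h : a ∉ s) (k : ℕ) :
    hpoly n (k + 1) (insert a s) = hpoly n (k + 1) s + X a * hpoly n k (insert a s) := by
  have hset : (insert a s).sym (k + 1) =
      s.sym (k + 1) ∪ ((insert a s).sym k).image (Sym.cons a) := by
    ext μ
    simp only [Finset.mem_sym_iff, Finset.mem_union, Finset.mem_image, Finset.mem_insert]
    constructor
    · intro hμ
      by_cases ha : a ∈ μ
      · right
        obtain ⟨ν, rfl⟩ := Sym.exists_cons_of_mem ha
        exact ⟨ν, fun b hb => hμ b (Sym.mem_cons_of_mem hb), rfl⟩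
      · left
        intro b hb
        rcases hμ b hb with rfl | h'
        · exact absurd hb ha
        · exact h'
    · rintro (hμ | ⟨ν, hν, rfl⟩)
      · exact fun b hb => Or.inr (hμ b hb)
      · intro b hb
        rcases Sym.mem_cons.1 hb with rfl | hb'
        · exact Or.inl rfl
        · exact hν b hb'
  have hdisj : Disjoint (s.sym (k + 1)) (((insert a s).sym k).image (Sym.cons a)) := by
    rw [Finset.disjoint_right]
    rintro μ hμ hμ'
    rw [Finset.mem_image] at hμ
    obtain ⟨ν, -, rfl⟩ := hμ
    exact h (Finset.mem_sym_iff.1 hμ' a (Sym.mem_cons_self a ν))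
  rw [hpoly, hset, Finset.sum_union hdisj,
    Finset.sum_image (fun ν _ ν' _ hh => (Sym.cons_inj_right a ν ν').1 hh)]
  simp only [Sym.cons, Multiset.map_cons, Multiset.prod_cons]
  rw [← Finset.mul_sum]
  rfl

lemma epoly_insert {a : Fin n} {s : Finset (Fin n)} (h : a ∉ s) (k : ℕ) :
    epoly n (k + 1) (insert a s) = epoly n (k + 1) s + X a * epoly n k s := by
  have hdisj : Disjoint (s.powersetCard (k + 1)) ((s.powersetCard k).image (insert a)) := by
    rw [Finset.disjoint_right]
    rintro t ht ht'
    rw [Finset.mem_image] at ht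
    obtain ⟨u, -, rfl⟩ := ht
    obtain ⟨hsub, -⟩ := Finset.mem_powersetCard.1 ht'
    exact h (hsub (Finset.mem_insert_self a u))
  have hinj : ∀ u ∈ s.powersetCard k, ∀ u' ∈ s.powersetCard k,
      insert a u = insert a u' → u = u' := by
    intro u hu u' hu' he
    have hau : a ∉ u := fun hau => h ((Finset.mem_powersetCard.1 hu).1 hau)
    have hau' : a ∉ u' := fun hau => h ((Finset.mem_powersetCard.1 hu').1 hau)
    rw [← Finset.erase_insert hau, he, Finset.erase_insert hau']
  simp only [epoly]
  rw [Finset.powersetCard_succ_insert h, Finset.sum_union hdisj, Finset.sum_image hinj,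
    Finset.mul_sum]
  congr 1
  refine Finset.sum_congr rfl fun u hu => ?_
  have hau : a ∉ u := fun hau => h ((Finset.mem_powersetCard.1 hu).1 hau)
  rw [Finset.prod_insert hau]

lemma LL_zero : LL n 0 = ∅ := by
  ext t; simp [LL]

lemma LL_n : LL n n = Finset.univ := by
  ext t; simp [LL, t.2]

lemma UU_zero : UU n 0 = Finset.univ := by
  ext t; simp [UU]

lemma UU_n : UU n n = ∅ := by
  ext t; simp [UU]

lemma LL_succ {r : ℕ} (hr : r < n) : LL n (r + 1) = insert ⟨r, hr⟩ (LL n r) := by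
  ext t
  simp only [LL, Finset.mem_filter, Finset.mem_univ, true_and, Finset.mem_insert, Fin.ext_iff]
  omega

lemma UU_insert {r : ℕ} (hr : r < n) : UU n r = insert ⟨r, hr⟩ (UU n (r + 1)) := by
  ext t
  simp only [UU, Finset.mem_filter, Finset.mem_univ, true_and, Finset.mem_insert, Fin.ext_iff]
  omega

lemma not_mem_LL {r : ℕ} (hr : r < n) : (⟨r, hr⟩ : Fin n) ∉ LL n r := by
  simp [LL]

lemma not_mem_UU {r : ℕ} (hr : r < n) : (⟨r, hr⟩ : Fin n) ∉ UU n (r + 1) := by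
  simp [UU]

lemma card_LL {r : ℕ} (hr : r ≤ n) : (LL n r).card = r := by
  induction r with
  | zero => simp [LL_zero]
  | succ r ih =>
    rw [LL_succ (by omega : r < n), Finset.card_insert_of_notMem (not_mem_LL _),
      ih (by omega)]

/-- The key congruence: modulo any ideal containing all complete homogeneous symmetric
polynomials of positive degree, `e_m` of a lower set is `(-1)^m` times `h_m` of the
complementary upper set. -/
lemma key (J : Ideal (MvPolynomial (Fin n) ℤ))
    (hJ : ∀ m : ℕ, 1 ≤ m → hpoly n m Finset.univ ∈ J) :
    ∀ r : ℕ, r ≤ n → ∀ m : ℕ, 1 ≤ m →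
      epoly n m (LL n r) - (-1) ^ m * hpoly n m (UU n r) ∈ J := by
  intro r
  induction r with
  | zero =>
    intro _ m hm
    rw [LL_zero, UU_zero, epoly_eq_zero (by simp; omega), zero_sub]
    exact J.neg_mem (J.mul_mem_left _ (hJ m hm))
  | succ r ih =>
    intro hr m hm
    have hrn : r < n := hr
    obtain ⟨j, rfl⟩ : ∃ j, m = j + 1 := ⟨m - 1, by omega⟩
    have hrec : hpoly n (j + 1) (UU n r) =
        hpoly n (j + 1) (UU n (r + 1)) + X (⟨r, hrn⟩ : Fin n) * hpoly n j (UU n r) := by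
      conv_lhs => rw [UU_insert hrn]
      rw [hpoly_insert (not_mem_UU hrn) j, ← UU_insert hrn]
    have key2 : epoly n j (LL n r) - (-1) ^ j * hpoly n j (UU n r) ∈ J := by
      rcases Nat.eq_zero_or_pos j with rfl | hj
      · simp [epoly_zero, hpoly_zero]
      · exact ih (by omega) j hj
    have key1 := ih (by omega) (j + 1) (by omega)
    have hEq : epoly n (j + 1) (LL n (r + 1)) - (-1) ^ (j + 1) * hpoly n (j + 1) (UU n (r + 1)) =
        (epoly n (j + 1) (LL n r) - (-1) ^ (j + 1) * hpoly n (j + 1) (UU n r)) +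
          X (⟨r, hrn⟩ : Fin n) *
            (epoly n j (LL n r) - (-1) ^ j * hpoly n j (UU n r)) := by
      rw [LL_succ hrn, epoly_insert (not_mem_LL hrn) j, hrec]
      ring
    rw [hEq]
    exact J.add_mem key1 (J.mul_mem_left _ key2)

/-- The span of the generators. -/
noncomputable def genIdeal (n : ℕ) : Ideal (MvPolynomial (Fin n) ℤ) :=
  Ideal.span {q : MvPolynomial (Fin n) ℤ | ∃ k : ℕ, 1 ≤ k ∧ k ≤ n ∧
    q = hpoly n k (UU n (k - 1))}

lemma claimC : ∀ d m r : ℕ, 1 ≤ m → r < m → r ≤ n → m - r = d →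
    hpoly n m (UU n r) ∈ genIdeal n := by
  intro d
  induction d using Nat.strong_induction_on with
  | _ d ih =>
    intro m r hm hrm hrn hd
    rcases eq_or_lt_of_le hrn with rfl | hrn'
    · rw [UU_n, hpoly_empty hm]
      exact Ideal.zero_mem _
    · rcases eq_or_lt_of_le (Nat.succ_le_of_lt hrm) with hr1 | hlt
      · refine Ideal.subset_span ⟨m, hm, by omega, ?_⟩
        rw [show m - 1 = r from by omega]
      · obtain ⟨j, rfl⟩ : ∃ j, m = j + 1 := ⟨m - 1, by omega⟩
        rw [UU_insert hrn', hpoly_insert (not_mem_UU hrn') j, ← UU_insert hrn']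
        refine Ideal.add_mem _ ?_ (Ideal.mul_mem_left _ _ ?_)
        · exact ih (j + 1 - (r + 1)) (by omega) (j + 1) (r + 1) (by omega) (by omega)
            (by omega) rfl
        · exact ih (j - r) (by omega) j r (by omega) (by omega) (by omega) rfl

lemma hpoly_univ_mem (m : ℕ) (hm : 1 ≤ m) : hpoly n m Finset.univ ∈ genIdeal n := by
  rw [← UU_zero (n := n)]
  exact claimC m m 0 hm hm (by omega) rfl

lemma esymm_mem (m : ℕ) (hm : 1 ≤ m) : esymm (Fin n) ℤ m ∈ genIdeal n := by
  have h := key (genIdeal n) hpoly_univ_mem n le_rfl m hm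
  rw [LL_n, UU_n, hpoly_empty hm, mul_zero, sub_zero] at h
  exact h

lemma constantCoeff_aeval_eq (f : Fin n → MvPolynomial (Fin n) ℤ)
    (hf : ∀ i, constantCoeff (f i) = 0) (q : MvPolynomial (Fin n) ℤ) :
    constantCoeff (aeval f q) = constantCoeff q := by
  induction q using MvPolynomial.induction_on with
  | C r => simp
  | add p q hp hq => rw [map_add, map_add, hp, hq, ← map_add]
  | mul_X p i hp => simp [map_mul, hf]

lemma aeval_sub_constant_mem (f : Fin n → MvPolynomial (Fin n) ℤ)
    (J : Ideal (MvPolynomial (Fin n) ℤ)) (hf : ∀ i, f i ∈ J) (q : MvPolynomial (Fin n) ℤ) :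
    aeval f q - C (constantCoeff q) ∈ J := by
  induction q using MvPolynomial.induction_on with
  | C r => simp only [aeval_C, constantCoeff_C, algebraMap_eq, sub_self]; exact J.zero_mem
  | add p q hp hq =>
    have h : aeval f (p + q) - C (constantCoeff (p + q)) =
        (aeval f p - C (constantCoeff p)) + (aeval f q - C (constantCoeff q)) := by
      simp only [map_add]
      ring
    rw [h]
    exact J.add_mem hp hq
  | mul_X p i hp =>
    have h : aeval f (p * X i) - C (constantCoeff (p * X i)) = aeval f p * f i := by
      simp [map_mul]
    rw [h]
    exact J.mul_mem_left _ (hf i)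

end SpanHpolyAux

theorem span_hpoly_eq_symmetric_ideal (n : ℕ) :
    Ideal.span {q : MvPolynomial (Fin n) ℤ | ∃ k : ℕ, 1 ≤ k ∧ k ≤ n ∧
        q = hpoly n k (Finset.univ.filter fun t : Fin n => k - 1 ≤ (t : ℕ))} =
    Ideal.span {p : MvPolynomial (Fin n) ℤ | p.IsSymmetric ∧ constantCoeff p = 0} := by
  open SpanHpolyAux in
  have hgen : Ideal.span {q : MvPolynomial (Fin n) ℤ | ∃ k : ℕ, 1 ≤ k ∧ k ≤ n ∧
      q = hpoly n k (Finset.univ.filter fun t : Fin n => k - 1 ≤ (t : ℕ))} = genIdeal n := rfl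
  rw [hgen]
  apply le_antisymm
  · -- genIdeal ⊆ S
    rw [genIdeal, Ideal.span_le]
    rintro q ⟨k, hk1, hkn, rfl⟩
    set S := Ideal.span {p : MvPolynomial (Fin n) ℤ | p.IsSymmetric ∧ constantCoeff p = 0}
    have hJ : ∀ m : ℕ, 1 ≤ m → hpoly n m Finset.univ ∈ S := by
      intro m hm
      refine Ideal.subset_span ⟨?_, constantCoeff_hpoly hm _⟩
      have : hpoly n m Finset.univ = hsymm (Fin n) ℤ m := by
        simp [hpoly, hsymm, Finset.sym_univ]
      rw [this]
      exact hsymm_isSymmetric _ _ _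
    have h := key S hJ (k - 1) (by omega) k hk1
    have hz : epoly n k (LL n (k - 1)) = 0 :=
      epoly_eq_zero (by rw [card_LL (by omega)]; omega)
    rw [hz, zero_sub] at h
    have h2 := S.mul_mem_left ((-1 : MvPolynomial (Fin n) ℤ) ^ k) h
    have h3 : ((-1 : MvPolynomial (Fin n) ℤ) ^ k) *
        -(((-1 : MvPolynomial (Fin n) ℤ) ^ k) * hpoly n k (UU n (k - 1))) =
        -hpoly n k (UU n (k - 1)) := by
      rw [mul_neg, ← mul_assoc, ← mul_pow, neg_mul_neg, one_mul, one_pow, one_mul]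
    rw [h3] at h2
    have h4 := S.neg_mem h2
    rwa [neg_neg] at h4
  · -- S ⊆ genIdeal
    rw [Ideal.span_le]
    rintro p ⟨hp, hc⟩
    obtain ⟨q, hq⟩ := esymmAlgHom_fin_surjective (R := ℤ) (m := n) (le_refl n)
      ⟨p, (mem_symmetricSubalgebra p).2 hp⟩
    have hq' : aeval (fun i : Fin n => esymm (Fin n) ℤ ((i : ℕ) + 1)) q = p := by
      have := congrArg Subtype.val hq
      rwa [esymmAlgHom_apply] at this
    have hf0 : ∀ i : Fin n, constantCoeff (esymm (Fin n) ℤ ((i : ℕ) + 1)) = 0 := by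
      intro i
      have : esymm (Fin n) ℤ ((i : ℕ) + 1) = epoly n ((i : ℕ) + 1) Finset.univ := rfl
      rw [this]
      exact constantCoeff_epoly (by omega) _
    have hcc : constantCoeff q = 0 := by
      have h := constantCoeff_aeval_eq _ hf0 q
      rw [hq', hc] at h
      exact h.symm
    have hmem := aeval_sub_constant_mem (fun i : Fin n => esymm (Fin n) ℤ ((i : ℕ) + 1))
      (genIdeal n) (fun i => esymm_mem _ (by omega)) q
    rwa [hq', hcc, map_zero, sub_zero] at hmem
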